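/- Let q ≥ 2, and let C be a code of length n over an alphabet Q of size q such that every coordinate i ∈ [n] has t pairwise disjoint recovering sets, each of size exactly r. Then |C| ≤ q^{n/∏_{j=1}^{t}(1+1/(jr))}; in particular, if |C| = q^k then the rate satisfies k/n ≤ 1/∏_{j=1}^{t}(1+1/(jr)). -/

import Mathlib

open Finset

lemma alt_sum_partial_frac (t : ℕ) : ∀ x : ℝ, 0 < x →
    ∑ s ∈ range (t+1), (-1:ℝ)^s * (t.choose s) / (s + x)
      = (t.factorial : ℝ) / ∏ m ∈ range (t+1), (x + m) := by
  induction t with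
  | zero => intro x hx; simp
  | succ t ih =>
    intro x hx
    have key : ∑ s ∈ range (t+2), (-1:ℝ)^s * ((t+1).choose s) / (s + x)
        = (∑ s ∈ range (t+1), (-1:ℝ)^s * (t.choose s) / (s + x))
          - ∑ s ∈ range (t+1), (-1:ℝ)^s * (t.choose s) / (s + (x+1)) := by
      rw [Finset.sum_range_succ' (fun s => (-1:ℝ)^s * ((t+1).choose s) / (s + x)) (t+1)]
      push_cast
      have hPascal : ∀ s ∈ range (t+1), (-1:ℝ)^(s+1) * ((t+1).choose (s+1)) / ((s+1) + x)
          = (-1:ℝ)^(s+1) * (t.choose s) / ((s+1) + x)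
            + (-1:ℝ)^(s+1) * (t.choose (s+1)) / ((s+1) + x) := by
        intro s _
        rw [Nat.choose_succ_succ]
        push_cast
        ring
      rw [Finset.sum_congr rfl hPascal, Finset.sum_add_distrib]
      have hB : ∑ s ∈ range (t+1), (-1:ℝ)^(s+1) * (t.choose s) / ((s+1) + x)
          = - ∑ s ∈ range (t+1), (-1:ℝ)^s * (t.choose s) / (s + (x+1)) := by
        rw [← Finset.sum_neg_distrib]
        refine Finset.sum_congr rfl fun s _ => ?_
        ring
      have hD : ∑ s ∈ range (t+1), (-1:ℝ)^(s+1) * (t.choose (s+1)) / ((s+1) + x)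
          = (∑ s ∈ range (t+1), (-1:ℝ)^s * (t.choose s) / (s + x))
            - ((t.choose 0 : ℝ)) / ((0:ℕ) + x) := by
        rw [Finset.sum_range_succ' (fun s => (-1:ℝ)^s * (t.choose s) / (s + x)) t]
        rw [Finset.sum_range_succ]
        simp [Nat.choose_succ_self]
      rw [hB, hD]
      simp only [Nat.choose_zero_right, Nat.cast_one, Nat.cast_zero, one_mul]
      push_cast
      ring
    rw [key, ih x hx, ih (x+1) (by linarith)]
    have h6 : ∏ m ∈ range (t+1), ((x+1) + (m:ℝ)) = (∏ m ∈ range (t+2), (x + m)) / x := by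
      rw [Finset.prod_range_succ' (fun m => x + (m:ℝ)) (t+1)]
      rw [mul_div_assoc]
      rw [show (x + (0:ℕ)) / x = 1 by field_simp; simp]
      rw [mul_one]
      refine Finset.prod_congr rfl fun m _ => by push_cast; ring
    have h7 : ∏ m ∈ range (t+1), (x + (m:ℝ)) = (∏ m ∈ range (t+2), (x + m)) / (x + (t+1)) := by
      rw [eq_div_iff (by positivity)]
      rw [Finset.prod_range_succ (fun m => x + (m:ℝ)) (t+1)]
      push_cast
      ring
    have hne2 : (∏ m ∈ range (t+2), (x + (m:ℝ))) ≠ 0 :=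
      Finset.prod_ne_zero_iff.2 fun m _ => by positivity
    rw [h6, h7]
    rw [Nat.factorial_succ]
    push_cast
    field_simp
    ring

lemma keyA {n : ℕ} (T : Finset (Fin n)) (j : Fin n) (hj : j ∉ T) :
    (T.card + 1) * ((Finset.univ : Finset (Equiv.Perm (Fin n))).filter
        (fun σ => ∀ x ∈ T, σ x < σ j)).card
      = n.factorial := by
  classical
  set S : Finset (Fin n) := insert j T with hS
  have hSne : S.Nonempty := insert_nonempty _ _
  have himne : ∀ σ : Equiv.Perm (Fin n), (S.image σ).Nonempty := fun σ => hSne.image σ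
  set φ : Equiv.Perm (Fin n) → Fin n :=
    fun σ => σ.symm ((S.image σ).max' (himne σ)) with hφ
  have hφmem : ∀ σ, φ σ ∈ S := by
    intro σ
    have := (S.image σ).max'_mem (himne σ)
    rw [mem_image] at this
    obtain ⟨x, hx, hxe⟩ := this
    have : φ σ = x := by rw [hφ]; simp only [← hxe, Equiv.symm_apply_apply]
    rwa [this]
  have hfiber : ∀ σ : Equiv.Perm (Fin n), φ σ = j ↔ ∀ x ∈ T, σ x < σ j := by
    intro σ
    constructor
    · intro h x hx
      have hmax : σ j = (S.image σ).max' (himne σ) := by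
        conv_lhs => rw [← h]
        rw [hφ]; simp
      have hle : σ x ≤ σ j := by
        rw [hmax]
        exact Finset.le_max' _ _ (mem_image_of_mem σ (mem_insert_of_mem hx))
      have hne : σ x ≠ σ j := fun he => hj (by rwa [σ.injective he] at hx)
      exact lt_of_le_of_ne hle hne
    · intro h
      have hmax : (S.image σ).max' (himne σ) = σ j := by
        apply le_antisymm
        · apply Finset.max'_le
          intro y hy
          rw [mem_image] at hy
          obtain ⟨x, hx, rfl⟩ := hy
          rcases mem_insert.1 hx with rfl | hxT
          · exact le_rfl
          · exact (h x hxT).le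
        · exact Finset.le_max' _ _ (mem_image_of_mem σ (mem_insert_self _ _))
      rw [hφ]; simp only [hmax, Equiv.symm_apply_apply]
  have himg : ∀ a b, a ∈ S → b ∈ S → ∀ σ : Equiv.Perm (Fin n),
      S.image ((σ * Equiv.swap a b : Equiv.Perm (Fin n)) : Fin n → Fin n) = S.image σ := by
    intro a b ha hb σ
    have hswap : S.image ((Equiv.swap a b : Equiv.Perm (Fin n)) : Fin n → Fin n) = S := by
      apply Finset.eq_of_subset_of_card_le
      · intro y hy
        rw [mem_image] at hy
        obtain ⟨x, hx, rfl⟩ := hy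
        rcases eq_or_ne x a with rfl | hxa
        · rwa [Equiv.swap_apply_left]
        rcases eq_or_ne x b with rfl | hxb
        · rwa [Equiv.swap_apply_right]
        · rwa [Equiv.swap_apply_of_ne_of_ne hxa hxb]
      · rw [Finset.card_image_of_injective _ (Equiv.injective _)]
    calc S.image ((σ * Equiv.swap a b : Equiv.Perm (Fin n)) : Fin n → Fin n)
        = (S.image ((Equiv.swap a b : Equiv.Perm (Fin n)) : Fin n → Fin n)).image σ := by
          rw [Finset.image_image]; rfl
      _ = S.image σ := by rw [hswap]
  have hequi : ∀ a b, a ∈ S → b ∈ S → ∀ σ : Equiv.Perm (Fin n),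
      φ (σ * Equiv.swap a b) = Equiv.swap a b (φ σ) := by
    intro a b ha hb σ
    show (σ * Equiv.swap a b).symm
        ((S.image ((σ * Equiv.swap a b : Equiv.Perm (Fin n)) : Fin n → Fin n)).max' (himne _))
      = Equiv.swap a b (σ.symm ((S.image σ).max' (himne σ)))
    have h1 : (S.image ((σ * Equiv.swap a b : Equiv.Perm (Fin n)) : Fin n → Fin n)).max'
          (himne _) = (S.image σ).max' (himne σ) := by
      congr 1
      exact himg a b ha hb σ
    rw [h1]
    simp [Equiv.Perm.mul_def, Equiv.symm_trans_apply, Equiv.symm_swap]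
  have hcard : ∀ a ∈ S,
      (Finset.univ.filter (fun σ : Equiv.Perm (Fin n) => φ σ = a)).card
        = (Finset.univ.filter (fun σ : Equiv.Perm (Fin n) => φ σ = j)).card := by
    intro a ha
    apply Finset.card_bij' (fun σ _ => σ * Equiv.swap a j) (fun σ _ => σ * Equiv.swap a j)
    · intro σ hσ
      rw [mem_filter] at hσ ⊢
      refine ⟨mem_univ _, ?_⟩
      rw [hequi a j ha (mem_insert_self _ _) σ, hσ.2, Equiv.swap_apply_left]
    · intro σ hσ
      rw [mem_filter] at hσ ⊢
      refine ⟨mem_univ _, ?_⟩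
      rw [hequi a j ha (mem_insert_self _ _) σ, hσ.2, Equiv.swap_apply_right]
    · intro σ _; simp [mul_assoc]
    · intro σ _; simp [mul_assoc]
  have hsum : ∑ a ∈ S,
      (Finset.univ.filter (fun σ : Equiv.Perm (Fin n) => φ σ = a)).card
        = n.factorial := by
    rw [← Finset.card_eq_sum_card_fiberwise (fun σ _ => hφmem σ)]
    simp [Fintype.card_perm]
  rw [Finset.sum_congr rfl hcard, Finset.sum_const] at hsum
  have hScard : S.card = T.card + 1 := by rw [hS, Finset.card_insert_of_notMem hj]
  rw [hScard, smul_eq_mul] at hsum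
  have hfe : (Finset.univ.filter (fun σ : Equiv.Perm (Fin n) => ∀ x ∈ T, σ x < σ j))
      = Finset.univ.filter (fun σ : Equiv.Perm (Fin n) => φ σ = j) := by
    apply Finset.filter_congr
    intro σ _
    simp [hfiber σ]
  rw [hfe, hsum]

lemma keyD {Q : Type*} [Fintype Q] [DecidableEq Q] {q n t : ℕ} (hq : Fintype.card Q = q)
    (C : Finset (Fin n → Q)) (R : Fin n → Fin t → Finset (Fin n))
    (hrec : ∀ i m, ∀ x ∈ C, ∀ y ∈ C, (∀ z ∈ R i m, x z = y z) → x i = y i)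
    (σ : Equiv.Perm (Fin n)) :
    C.card ≤ q ^ (n - ((Finset.univ : Finset (Fin n)).filter
      (fun j => ∃ m, ∀ x ∈ R j m, σ x < σ j)).card) := by
  classical
  set Det : Finset (Fin n) :=
    Finset.univ.filter (fun j => ∃ m, ∀ x ∈ R j m, σ x < σ j) with hDet
  set U : Finset (Fin n) := Finset.univ \ Det with hU
  set ρ : (Fin n → Q) → ({i // i ∈ U} → Q) := fun x => fun i => x i.1 with hρ
  have hinj : Set.InjOn ρ C := by
    intro x hx y hy hxy
    by_contra hne
    have hDne : (Finset.univ.filter (fun i => x i ≠ y i)).Nonempty := by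
      obtain ⟨i, hi⟩ := Function.ne_iff.1 hne
      exact ⟨i, Finset.mem_filter.2 ⟨Finset.mem_univ _, hi⟩⟩
    obtain ⟨j, hjmem, hjmin⟩ := Finset.exists_min_image _ σ hDne
    have hxyj : x j ≠ y j := (Finset.mem_filter.1 hjmem).2
    by_cases hjd : j ∈ Det
    · obtain ⟨m, hm⟩ := (Finset.mem_filter.1 hjd).2
      have hag : ∀ z ∈ R j m, x z = y z := by
        intro z hz
        by_contra hzz
        have hzD : z ∈ Finset.univ.filter (fun i => x i ≠ y i) :=
          Finset.mem_filter.2 ⟨Finset.mem_univ _, hzz⟩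
        exact absurd (hm z hz) (not_lt.2 (hjmin z hzD))
      exact hxyj (hrec j m x hx y hy hag)
    · have hjU : j ∈ U := Finset.mem_sdiff.2 ⟨Finset.mem_univ _, hjd⟩
      exact hxyj (congrFun hxy ⟨j, hjU⟩)
  calc C.card = (C.image ρ).card := (Finset.card_image_of_injOn hinj).symm
    _ ≤ Fintype.card ({i // i ∈ U} → Q) := Finset.card_le_card (Finset.subset_univ _) |>.trans
        (by rw [Finset.card_univ])
    _ = q ^ U.card := by rw [Fintype.card_fun, hq, Fintype.card_coe]
    _ = q ^ (n - Det.card) := by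
        rw [hU, Finset.card_sdiff_of_subset (Finset.subset_univ _), Finset.card_univ, Fintype.card_fin]

lemma keyB {n t r : ℕ} (j : Fin n) (R : Fin t → Finset (Fin n))
    (h1 : ∀ m, j ∉ R m) (h2 : ∀ m, (R m).card = r)
    (h3 : ∀ m m', m ≠ m' → Disjoint (R m) (R m'))
    (keyA : ∀ (T : Finset (Fin n)), j ∉ T →
      (T.card + 1) * ((Finset.univ : Finset (Equiv.Perm (Fin n))).filter
        (fun σ => ∀ x ∈ T, σ x < σ j)).card = n.factorial) :
    ∑ σ ∈ (Finset.univ : Finset (Equiv.Perm (Fin n))),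
      (if (∀ m, ∃ x ∈ R m, ¬ (σ x < σ j)) then (1:ℝ) else 0)
    = ∑ S ∈ (Finset.univ : Finset (Fin t)).powerset,
        (-1:ℝ)^S.card * ((n.factorial : ℝ) / ((S.card : ℝ) * r + 1)) := by
  classical
  have step1 : ∀ σ : Equiv.Perm (Fin n),
      (if (∀ m, ∃ x ∈ R m, ¬ (σ x < σ j)) then (1:ℝ) else 0)
        = ∏ m ∈ (Finset.univ : Finset (Fin t)),
            (-(if (∀ x ∈ R m, σ x < σ j) then (1:ℝ) else 0) + 1) := by
    intro σ
    by_cases h : ∃ m, ∀ x ∈ R m, σ x < σ j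
    · obtain ⟨m0, hm0⟩ := h
      rw [Finset.prod_eq_zero (Finset.mem_univ m0) (by rw [if_pos hm0]; ring)]
      rw [if_neg]
      push_neg
      exact ⟨m0, hm0⟩
    · push_neg at h
      rw [Finset.prod_eq_one fun m _ => by
        rw [if_neg (by push_neg; exact h m)]; ring]
      rw [if_pos]
      intro m
      obtain ⟨x, hx, hxx⟩ := h m
      exact ⟨x, hx, not_lt.2 hxx⟩
  rw [Finset.sum_congr rfl fun σ _ => step1 σ]
  have step2 : ∀ σ : Equiv.Perm (Fin n),
      ∏ m ∈ (Finset.univ : Finset (Fin t)),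
          (-(if (∀ x ∈ R m, σ x < σ j) then (1:ℝ) else 0) + 1)
        = ∑ S ∈ (Finset.univ : Finset (Fin t)).powerset,
            (-1:ℝ)^S.card * (if (∀ x ∈ S.biUnion R, σ x < σ j) then (1:ℝ) else 0) := by
    intro σ
    rw [Finset.prod_add]
    refine Finset.sum_congr rfl fun S _ => ?_
    rw [Finset.prod_const_one, mul_one]
    have : ∀ m ∈ S, (-(if (∀ x ∈ R m, σ x < σ j) then (1:ℝ) else 0))
        = (-1) * (if (∀ x ∈ R m, σ x < σ j) then (1:ℝ) else 0) := fun m _ => by ring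
    rw [Finset.prod_congr rfl this, Finset.prod_mul_distrib, Finset.prod_const,
      Finset.prod_boole]
    congr 1
    by_cases hcond : ∀ x ∈ S.biUnion R, σ x < σ j
    · rw [if_pos hcond, if_pos (fun m hm x hx => hcond x (Finset.mem_biUnion.2 ⟨m, hm, hx⟩))]
    · rw [if_neg hcond, if_neg (fun hc => hcond fun x hx => by
        obtain ⟨m, hm, hxm⟩ := Finset.mem_biUnion.1 hx
        exact hc m hm x hxm)]
  rw [Finset.sum_congr rfl fun σ _ => step2 σ, Finset.sum_comm]
  refine Finset.sum_congr rfl fun S _ => ?_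
  rw [← Finset.mul_sum]
  congr 1
  rw [Finset.sum_boole]
  have hjT : j ∉ S.biUnion R := by
    intro hmem
    obtain ⟨m, _, hm⟩ := Finset.mem_biUnion.1 hmem
    exact h1 m hm
  have hTcard : (S.biUnion R).card = S.card * r := by
    rw [Finset.card_biUnion (fun m _ m' _ hne => h3 m m' hne)]
    simp [h2, Finset.sum_const, smul_eq_mul]
  have := keyA (S.biUnion R) hjT
  rw [hTcard] at this
  have hpos : (0:ℝ) < (S.card : ℝ) * r + 1 := by positivity
  rw [eq_div_iff (ne_of_gt hpos)]
  have := congrArg (fun z : ℕ => (z : ℝ)) this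
  push_cast at this
  rw [← this]
  ring
lemma keyC {t r : ℕ} (hr : 1 ≤ r) :
    ∑ S ∈ (Finset.univ : Finset (Fin t)).powerset,
        (-1:ℝ)^S.card * (1/((S.card : ℝ)*r+1))
      = ∏ j ∈ Finset.Icc 1 t, ((j:ℝ)*r)/((j:ℝ)*r+1) := by
  have hr0 : (0:ℝ) < r := by exact_mod_cast hr
  have hx : (0:ℝ) < 1/r := by positivity
  have hprod : (∏ m ∈ range (t+1), ((1/r:ℝ) + m))
      * (∏ j ∈ Finset.Icc 1 t, ((j:ℝ)*r)/((j:ℝ)*r+1)) = (1/r) * t.factorial := by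
    induction t with
    | zero => simp
    | succ t ih =>
      rw [Finset.prod_range_succ, Finset.prod_Icc_succ_top (Nat.one_le_iff_ne_zero.2 (Nat.succ_ne_zero t))]
      have h1 : ((t+1:ℕ):ℝ)*r + 1 ≠ 0 := by positivity
      have : (∏ m ∈ range (t+1), ((1/r:ℝ) + m)) * ((1/r:ℝ) + (t+1:ℕ))
          * ((∏ j ∈ Finset.Icc 1 t, ((j:ℝ)*r)/((j:ℝ)*r+1)) * (((t+1:ℕ):ℝ)*r/(((t+1:ℕ):ℝ)*r+1)))
          = ((∏ m ∈ range (t+1), ((1/r:ℝ) + m)) * (∏ j ∈ Finset.Icc 1 t, ((j:ℝ)*r)/((j:ℝ)*r+1)))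
            * (((1/r:ℝ) + (t+1:ℕ)) * (((t+1:ℕ):ℝ)*r/(((t+1:ℕ):ℝ)*r+1))) := by ring
      rw [this, ih]
      rw [Nat.factorial_succ]
      have h2 : ((1/r:ℝ) + (t+1:ℕ)) * (((t+1:ℕ):ℝ)*r/(((t+1:ℕ):ℝ)*r+1)) = ((t:ℝ)+1) := by
        push_cast
        field_simp
        ring
      rw [h2]
      push_cast
      ring
  have hsum : ∑ S ∈ (Finset.univ : Finset (Fin t)).powerset,
      (-1:ℝ)^S.card * (1/((S.card : ℝ)*r+1))
      = ∑ s ∈ range (t+1), (t.choose s : ℝ) * ((-1:ℝ)^s * (1/((s:ℝ)*r+1))) := by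
    rw [Finset.sum_powerset_apply_card (fun s => (-1:ℝ)^s * (1/((s:ℝ)*r+1)))]
    simp only [Finset.card_univ, Fintype.card_fin, nsmul_eq_mul]
  rw [hsum]
  have hterm : ∀ s ∈ range (t+1), (t.choose s : ℝ) * ((-1:ℝ)^s * (1/((s:ℝ)*r+1)))
      = (1/r) * ((-1:ℝ)^s * (t.choose s) / ((s:ℝ) + 1/r)) := by
    intro s _
    have hne : ((s:ℝ)*r+1) ≠ 0 := by positivity
    have hne2 : ((s:ℝ) + 1/r) ≠ 0 := by positivity
    field_simp
  have hprodne : (∏ m ∈ range (t+1), ((1/r:ℝ) + m)) ≠ 0 :=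
    Finset.prod_ne_zero_iff.2 fun m _ => by positivity
  rw [Finset.sum_congr rfl hterm, ← Finset.mul_sum, alt_sum_partial_frac t (1/r) hx]
  have h9 : (1/(r:ℝ)) * ((t.factorial:ℝ) / ∏ m ∈ range (t+1), ((1/r:ℝ) + m))
      = ((1/(r:ℝ)) * (t.factorial:ℝ)) / ∏ m ∈ range (t+1), ((1/r:ℝ) + m) := by ring
  rw [h9, ← hprod, mul_comm, mul_div_assoc, div_self hprodne, mul_one]

/-- Upper bound on the cardinality (and hence rate) of an LRC code
with `t` pairwise disjoint recovering sets, each of size exactly `r`, for every coordinate. -/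
theorem lrc_rate_bound {Q : Type*} [Fintype Q] (q n r t : ℕ)
    (hq : Fintype.card Q = q) (hq2 : 2 ≤ q) (hr : 1 ≤ r) (ht : 1 ≤ t)
    (hn : t * r ≤ n - 1)
    (C : Finset (Fin n → Q))
    (hC : ∀ i : Fin n, ∃ R : Fin t → Finset (Fin n),
      (∀ j, i ∉ R j) ∧ (∀ j, (R j).card = r) ∧
      (∀ j j', j ≠ j' → Disjoint (R j) (R j')) ∧
      (∀ j, ∀ x ∈ C, ∀ y ∈ C, (∀ m ∈ R j, x m = y m) → x i = y i)) :
    (C.card : ℝ) ≤ (q : ℝ) ^ ((n : ℝ) / ∏ j ∈ Finset.Icc 1 t, (1 + 1 / ((j : ℝ) * r))) ∧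
      ∀ k : ℕ, C.card = q ^ k →
        (k : ℝ) / n ≤ 1 / ∏ j ∈ Finset.Icc 1 t, (1 + 1 / ((j : ℝ) * r)) := by
  classical
  have hrt1 : 1 ≤ t * r := le_trans (by norm_num) (Nat.mul_le_mul ht hr)
  have hn2 : 2 ≤ n := by omega
  choose R hR1 hR2 hR3 hR4 using hC
  set P : ℝ := ∏ j ∈ Finset.Icc 1 t, (1 + 1 / ((j : ℝ) * r)) with hPdef
  set G : ℝ := ∏ j ∈ Finset.Icc 1 t, ((j:ℝ) * r) / ((j:ℝ) * r + 1) with hGdef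
  have hr0 : (0:ℝ) < r := by exact_mod_cast hr
  have hGpos : 0 < G := Finset.prod_pos fun j hj => by
    have hj1 : 1 ≤ j := (Finset.mem_Icc.1 hj).1
    have hjp : (0:ℝ) < (j:ℝ) := by exact_mod_cast hj1
    positivity
  have hPG : P * G = 1 := by
    rw [hPdef, hGdef, ← Finset.prod_mul_distrib]
    apply Finset.prod_eq_one
    intro j hj
    have hj1 : 1 ≤ j := (Finset.mem_Icc.1 hj).1
    have hjp : (0:ℝ) < (j:ℝ) := by exact_mod_cast hj1
    have h0 : (0:ℝ) < (j:ℝ)*r := by positivity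
    field_simp
  have hPpos : 0 < P := by nlinarith [hGpos]
  have hG1P : G = 1 / P := by
    field_simp
    linarith [hPG]
  set D : Equiv.Perm (Fin n) → Finset (Fin n) :=
    fun σ => Finset.univ.filter (fun j => ∃ m, ∀ x ∈ R j m, σ x < σ j) with hD
  have hcount : ∀ σ, C.card ≤ q ^ (n - (D σ).card) := fun σ =>
    keyD hq C R (fun i m => hR4 i m) σ
  have hdlen : ∀ σ, (D σ).card ≤ n := fun σ => by
    calc (D σ).card ≤ (Finset.univ : Finset (Fin n)).card := Finset.card_filter_le _ _
      _ = n := by simp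
  -- averaging
  have hperj : ∀ j : Fin n,
      ∑ σ ∈ (Finset.univ : Finset (Equiv.Perm (Fin n))),
        (if (∀ m, ∃ x ∈ R j m, ¬ (σ x < σ j)) then (1:ℝ) else 0)
      = (n.factorial : ℝ) * G := by
    intro j
    rw [keyB j (R j) (hR1 j) (hR2 j) (hR3 j) (fun T hT => keyA T j hT)]
    rw [hGdef, ← keyC (t := t) hr, Finset.mul_sum]
    refine Finset.sum_congr rfl fun S _ => ?_
    ring
  have hcompl : ∀ σ : Equiv.Perm (Fin n), ((n:ℝ) - (D σ).card)
      = ∑ j ∈ (Finset.univ : Finset (Fin n)),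
          (if (∀ m, ∃ x ∈ R j m, ¬ (σ x < σ j)) then (1:ℝ) else 0) := by
    intro σ
    rw [Finset.sum_boole]
    have hfe : (Finset.univ : Finset (Fin n)).filter
          (fun j => ∀ m, ∃ x ∈ R j m, ¬ (σ x < σ j))
        = Finset.univ.filter (fun j => ¬ ∃ m, ∀ x ∈ R j m, σ x < σ j) := by
      apply Finset.filter_congr
      intro j _
      push_neg
      simp only [not_lt]
    rw [hfe]
    have htot : (D σ).card
        + (Finset.univ.filter (fun j => ¬ ∃ m, ∀ x ∈ R j m, σ x < σ j)).card = n := by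
      have h0 := Finset.card_filter_add_card_filter_not
        (s := (Finset.univ : Finset (Fin n)))
        (p := fun j => ∃ m, ∀ x ∈ R j m, σ x < σ j)
      simpa using h0
    have hc := congrArg (fun z : ℕ => (z : ℝ)) htot
    push_cast at hc
    linarith
  have hsum : ∑ σ ∈ (Finset.univ : Finset (Equiv.Perm (Fin n))), ((n:ℝ) - (D σ).card)
      = ∑ σ ∈ (Finset.univ : Finset (Equiv.Perm (Fin n))), ((n:ℝ) * G) := by
    rw [Finset.sum_congr rfl fun σ _ => hcompl σ, Finset.sum_comm]
    rw [Finset.sum_congr rfl fun j _ => hperj j]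
    rw [Finset.sum_const, Finset.sum_const]
    simp only [Finset.card_univ, Fintype.card_perm, Fintype.card_fin, nsmul_eq_mul]
    ring
  obtain ⟨σ0, _, hσ0⟩ := Finset.exists_le_of_sum_le Finset.univ_nonempty hsum.le
  set d := (D σ0).card with hd
  have hcast : ((n - d : ℕ) : ℝ) = (n:ℝ) - d := by
    rw [Nat.cast_sub (hdlen σ0)]
  have hq1 : (1:ℝ) < q := by exact_mod_cast lt_of_lt_of_le one_lt_two hq2
  have hexp : ((n - d : ℕ) : ℝ) ≤ (n:ℝ)/P := by
    rw [hcast]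
    calc (n:ℝ) - d ≤ n * G := hσ0
      _ = (n:ℝ)/P := by rw [hG1P]; ring
  have hmain : (C.card : ℝ) ≤ (q:ℝ) ^ ((n:ℝ)/P) := by
    calc (C.card : ℝ) ≤ ((q ^ (n - d) : ℕ) : ℝ) := by exact_mod_cast hcount σ0
      _ = (q:ℝ) ^ ((n - d : ℕ) : ℝ) := by push_cast [Real.rpow_natCast]; ring
      _ ≤ (q:ℝ) ^ ((n:ℝ)/P) := (Real.rpow_le_rpow_left_iff hq1).2 hexp
  refine ⟨hmain, ?_⟩
  intro k hk
  rw [hk] at hmain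
  have hk2 : ((q:ℝ)) ^ (k:ℝ) ≤ (q:ℝ) ^ ((n:ℝ)/P) := by
    rw [Real.rpow_natCast]
    exact_mod_cast hmain
  have hk3 : (k:ℝ) ≤ (n:ℝ)/P := (Real.rpow_le_rpow_left_iff hq1).1 hk2
  have hn0 : (0:ℝ) < n := by
    have : 0 < n := by omega
    exact_mod_cast this
  calc (k:ℝ)/n ≤ ((n:ℝ)/P)/n := by gcongr
    _ = 1/P := by
      rw [div_div, mul_comm, ← div_div, div_self hn0.ne']
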